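/- In the multiplicative fitness model, the expected one-step change in the visibility of node i, conditioned on the current graph and the fitness ξ_new of the incoming node, satisfies the exact identity ∑_{ℓ∈V} (ξ_ℓ D(ℓ)/ψ) · (ξ_i(D(i) + 1{ℓ=i})/(ψ + ξ_ℓ + ξ_new)) − ξ_i D(i)/ψ = (ξ_i D(i)/ψ) · [ ξ_i(ψ − D(i)(ξ_i + ξ_new))/(ψ(ψ + ξ_i + ξ_new)) − ∑_{ℓ≠i} ξ_ℓ D(ℓ)(ξ_ℓ + ξ_new)/(ψ(ψ + ξ_ℓ + ξ_new)) ]. -/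

import Mathlib

open Finset

/-- In the multiplicative fitness model, the expected one-step change in the visibility of
node `i`, conditioned on the current graph and the fitness `ξ_new` of the incoming node,
satisfies the stated exact identity. -/
theorem mf_expected_visibility_change_exact
    {V : Type*} [Fintype V] [DecidableEq V]
    (D : V → ℕ) (hD : ∀ j, 1 ≤ D j)
    (ξ : V → ℝ) (hξ : ∀ j, 0 < ξ j)
    (ψ : ℝ) (hψ : ψ = ∑ j, ξ j * (D j : ℝ))
    (ξnew : ℝ) (hξnew : 0 < ξnew) (i : V) :
    (∑ ℓ, (ξ ℓ * (D ℓ : ℝ) / ψ)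
          * (ξ i * ((D i : ℝ) + if ℓ = i then 1 else 0) / (ψ + ξ ℓ + ξnew)))
        - ξ i * (D i : ℝ) / ψ
      = (ξ i * (D i : ℝ) / ψ) *
          (ξ i * (ψ - (D i : ℝ) * (ξ i + ξnew)) / (ψ * (ψ + ξ i + ξnew))
            - ∑ ℓ ∈ univ.erase i,
                ξ ℓ * (D ℓ : ℝ) * (ξ ℓ + ξnew) / (ψ * (ψ + ξ ℓ + ξnew))) := by
  have hterm : ∀ j, 0 < ξ j * (D j : ℝ) := fun j =>
    mul_pos (hξ j) (by exact_mod_cast Nat.cast_pos.mpr (hD j))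
  have hψ0 : 0 < ψ := hψ ▸ Finset.sum_pos (fun j _ => hterm j) ⟨i, mem_univ i⟩
  have hden : ∀ ℓ : V, (0:ℝ) < ψ + ξ ℓ + ξnew := fun ℓ => by
    have := hξ ℓ; linarith
  have h1 : ξ i * (D i : ℝ) / ψ
      = ∑ ℓ, (ξ ℓ * (D ℓ : ℝ) / ψ) * (ξ i * (D i : ℝ) / ψ) := by
    rw [← Finset.sum_mul, ← Finset.sum_div, ← hψ, div_self hψ0.ne', one_mul]
  conv_lhs => rw [h1, ← Finset.sum_sub_distrib,
    ← Finset.add_sum_erase (f := fun ℓ =>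
      (ξ ℓ * (D ℓ : ℝ) / ψ) * (ξ i * ((D i : ℝ) + if ℓ = i then 1 else 0) / (ψ + ξ ℓ + ξnew))
        - (ξ ℓ * (D ℓ : ℝ) / ψ) * (ξ i * (D i : ℝ) / ψ)) _ (mem_univ i)]
  rw [mul_sub, Finset.mul_sum]
  conv_rhs => rw [sub_eq_add_neg, ← Finset.sum_neg_distrib]
  congr 1
  · simp only [if_pos rfl, eq_self_iff_true, if_true]
    have := (hden i).ne'
    field_simp
    ring
  · refine Finset.sum_congr rfl fun ℓ hℓ => ?_
    rw [if_neg (Finset.ne_of_mem_erase hℓ)]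
    have := (hden ℓ).ne'
    field_simp
    ring
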